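/- Let O be an order in a number field K with ring of integers O_K, and let p_1, ..., p_k be distinct nonzero prime ideals of O. For each i, let p_i·O_K = P_{i,1}^{e_{i,1}} ··· P_{i,l_i}^{e_{i,l_i}} be the factorization into distinct prime ideals P_{i,j} of O_K with exponents e_{i,j} ≥ 1. Then [O_K : O] ≥ ∏_{i=1}^k (1/[O : p_i]) ∏_{j=1}^{l_i} N(P_{i,j})^{e_{i,j}}. -/

import Mathlib

open NumberField

private lemma prod_eq_inf_aux {R : Type*} [CommRing R] {ι : Type*} [DecidableEq ι]
    (s : Finset ι) (f : ι → Ideal R)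
    (h : ∀ i ∈ s, ∀ j ∈ s, i ≠ j → f i ⊔ f j = ⊤) : ∏ i ∈ s, f i = s.inf f := by
  induction s using Finset.induction_on with
  | empty => simp [Ideal.one_eq_top]
  | @insert a s ha ih =>
    rw [Finset.prod_insert ha, Finset.inf_insert,
      ← ih (fun i hi j hj hij => h i (Finset.mem_insert_of_mem hi) j
        (Finset.mem_insert_of_mem hj) hij)]
    exact Ideal.mul_eq_inf_of_coprime <| Ideal.sup_prod_eq_top fun j hj =>
      h a (Finset.mem_insert_self a s) j (Finset.mem_insert_of_mem hj)
        (fun hh => ha (hh ▸ hj))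

private lemma order_finite {K : Type*} [Field K] [NumberField K] (O : Subring (𝓞 K)) :
    Module.Finite ℤ ↥O := by
  have hfinN : Module.Finite ℤ ↥(AddSubgroup.toIntSubmodule O.toAddSubgroup) :=
    Module.Finite.iff_fg.mpr (IsNoetherian.noetherian _)
  let eON : ↥(AddSubgroup.toIntSubmodule O.toAddSubgroup) ≃+ ↥O :=
    { toFun := fun x => ⟨x.1, x.2⟩, invFun := fun x => ⟨x.1, x.2⟩,
      left_inv := fun _ => rfl, right_inv := fun _ => rfl, map_add' := fun _ _ => rfl }
  exact Module.Finite.equiv eON.toIntLinearEquiv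

private lemma order_free {K : Type*} [Field K] [NumberField K] (O : Subring (𝓞 K)) :
    Module.Free ℤ ↥O := by
  haveI := order_finite O
  haveI : NoZeroSMulDivisors ℤ ↥O := by
    constructor
    intro c x h
    rw [zsmul_eq_mul] at h
    rcases mul_eq_zero.mp h with h | h
    · exact Or.inl (by exact_mod_cast h)
    · exact Or.inr h
  exact Module.free_of_finite_type_torsion_free'

private lemma order_quot_finite {K : Type*} [Field K] [NumberField K] {O : Subring (𝓞 K)}
    (q : Ideal ↥O) (hq : q ≠ ⊥) : Finite (↥O ⧸ q) := by
  haveI := order_finite O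
  haveI := order_free O
  exact Ideal.finiteQuotientOfFreeOfNeBot q hq

private lemma order_prime_maximal {K : Type*} [Field K] [NumberField K] {O : Subring (𝓞 K)}
    (q : Ideal ↥O) (hq : q.IsPrime) (hq' : q ≠ ⊥) : q.IsMaximal := by
  haveI := hq
  haveI := order_quot_finite q hq'
  exact Ideal.Quotient.maximal_of_isField _ (Finite.isField_of_domain _)

set_option synthInstance.maxHeartbeats 1000000 in
set_option maxHeartbeats 1000000 in
private lemma order_card_quot_prod {K : Type*} [Field K] [NumberField K] {O : Subring (𝓞 K)}
    {k : ℕ} (p : Fin k → Ideal ↥O) (hpprime : ∀ i, (p i).IsPrime) (hpne : ∀ i, p i ≠ ⊥)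
    (hpdist : Function.Injective p) :
    Nat.card (↥O ⧸ (∏ i, p i)) = ∏ i, Nat.card (↥O ⧸ p i) := by
  have hcop : Pairwise (Function.onFun IsCoprime p) := fun i j hij =>
    Ideal.isCoprime_iff_sup_eq.mpr <|
      Ideal.IsMaximal.coprime_of_ne (order_prime_maximal _ (hpprime i) (hpne i))
        (order_prime_maximal _ (hpprime j) (hpne j)) (fun h => hij (hpdist h))
  have hprodinf : (∏ i, p i) = ⨅ i, p i := by
    rw [prod_eq_inf_aux _ p (fun i _ j _ hij => (hcop hij).sup_eq), Finset.inf_eq_iInf]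
    simp
  rw [hprodinf, Nat.card_congr (Ideal.quotientInfRingEquivPiQuotient p hcop).toEquiv,
    Nat.card_pi]

private lemma map_prod_aux {K : Type*} [Field K] [NumberField K] (O : Subring (𝓞 K))
    {k : ℕ} (p : Fin k → Ideal ↥O)
    {l : Fin k → ℕ} (P : (i : Fin k) → Fin (l i) → Ideal (𝓞 K))
    (e : (i : Fin k) → Fin (l i) → ℕ)
    (hfact : ∀ i, (p i).map O.subtype = ∏ j, P i j ^ e i j) :
    Ideal.map O.subtype (∏ i, p i) = ∏ i, ∏ j, P i j ^ e i j := by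
  refine (map_prod (Ideal.mapHom O.subtype) p Finset.univ).trans ?_
  exact Finset.prod_congr rfl fun i _ => hfact i

private lemma absNorm_prod_aux {K : Type*} [Field K] [NumberField K]
    {k : ℕ} {l : Fin k → ℕ} (P : (i : Fin k) → Fin (l i) → Ideal (𝓞 K))
    (e : (i : Fin k) → Fin (l i) → ℕ) :
    Ideal.absNorm (∏ i, ∏ j, P i j ^ e i j) = ∏ i, ∏ j, Ideal.absNorm (P i j) ^ e i j := by
  refine (map_prod Ideal.absNorm _ Finset.univ).trans ?_
  refine Finset.prod_congr rfl fun i _ => ?_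
  refine (map_prod Ideal.absNorm _ Finset.univ).trans ?_
  exact Finset.prod_congr rfl fun j _ => map_pow _ _ _

private lemma index_map_aux {K : Type*} [Field K] [NumberField K] (O : Subring (𝓞 K))
    (I : Ideal ↥O) :
    (Ideal.map O.subtype I).toAddSubgroup.index ∣
      Nat.card (↥O ⧸ I) * O.toAddSubgroup.index := by
  have hrange : (O.subtype.toAddMonoidHom).range = O.toAddSubgroup := by
    ext x
    constructor
    · rintro ⟨y, rfl⟩; exact y.2
    · intro hx; exact ⟨⟨x, hx⟩, rfl⟩
  have hAindex : (AddSubgroup.map O.subtype.toAddMonoidHom I.toAddSubgroup).index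
      = Nat.card (↥O ⧸ I) * O.toAddSubgroup.index := by
    rw [AddSubgroup.index_map_of_injective _ (fun a b hab => Subtype.ext hab), hrange]
    rfl
  have hAle : AddSubgroup.map O.subtype.toAddMonoidHom I.toAddSubgroup ≤
      (Ideal.map O.subtype I).toAddSubgroup := by
    rintro _ ⟨y, hy, rfl⟩
    exact Ideal.mem_map_of_mem _ hy
  exact hAindex ▸ AddSubgroup.index_dvd_of_le hAle

/-- Index bound: if `p 1, ..., p k` are distinct nonzero primes of an order `O` of `K`, with
factorisations `p i · 𝓞 K = ∏ j, (P i j) ^ (e i j)` into distinct primes of `𝓞 K`, then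
`[𝓞 K : O] ≥ ∏ i (1/[O : p i]) ∏ j N(P i j) ^ (e i j)`, stated multiplicatively. -/
theorem index_lower_bound {K : Type*} [Field K] [NumberField K]
    (O : Subring (𝓞 K)) (hO : O.toAddSubgroup.index ≠ 0)
    {k : ℕ} (p : Fin k → Ideal O) (hpprime : ∀ i, (p i).IsPrime) (hpne : ∀ i, p i ≠ ⊥)
    (hpdist : Function.Injective p)
    (l : Fin k → ℕ) (hl : ∀ i, 1 ≤ l i)
    (P : (i : Fin k) → Fin (l i) → Ideal (𝓞 K)) (hPprime : ∀ i j, (P i j).IsPrime)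
    (hPdist : ∀ i, Function.Injective (P i))
    (e : (i : Fin k) → Fin (l i) → ℕ) (he : ∀ i j, 1 ≤ e i j)
    (hfact : ∀ i, (p i).map O.subtype = ∏ j, P i j ^ e i j) :
    ∏ i, ∏ j, Ideal.absNorm (P i j) ^ e i j ≤
      O.toAddSubgroup.index * ∏ i, Nat.card (O ⧸ p i) := by
  have hcardI : Nat.card (↥O ⧸ (∏ i, p i)) = ∏ i, Nat.card (↥O ⧸ p i) :=
    order_card_quot_prod p hpprime hpne hpdist
  have hcardne : ∀ i, Nat.card (↥O ⧸ p i) ≠ 0 := fun i => by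
    haveI := order_quot_finite (p i) (hpne i)
    exact Nat.card_pos.ne'
  have habs : Ideal.absNorm (Ideal.map O.subtype (∏ i, p i)) =
      ∏ i, ∏ j, Ideal.absNorm (P i j) ^ e i j := by
    rw [map_prod_aux O p P e hfact, absNorm_prod_aux P e]
  have habs_eq : Ideal.absNorm (Ideal.map O.subtype (∏ i, p i)) =
      (Ideal.map O.subtype (∏ i, p i)).toAddSubgroup.index := rfl
  have hdvd := index_map_aux O (∏ i, p i)
  rw [← habs, habs_eq]
  refine (Nat.le_of_dvd ?_ hdvd).trans_eq ?_
  · rw [hcardI]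
    exact Nat.pos_of_ne_zero (mul_ne_zero (Finset.prod_ne_zero_iff.mpr fun i _ => hcardne i) hO)
  · rw [hcardI, mul_comm]
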